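/- Let u, v ∈ (0,1) and let α, β, γ ∈ (−1,1) with α ≠ 0, β ≠ 0, and set ρ = αβγ. Then C(u,v;ρ) = ∫_{−∞}^{∞} ∫_{−∞}^{∞} Φ((Φ⁻¹(u) − α·x)/√(1−α²)) · Φ((Φ⁻¹(v) − β·y)/√(1−β²)) · φ₂(x,y;γ) dy dx. -/

import Mathlib

open MeasureTheory Real Set

/-- Standard normal density φ. -/
noncomputable def stdPdf (x : ℝ) : ℝ :=
  (1 / Real.sqrt (2 * Real.pi)) * Real.exp (-x ^ 2 / 2)

/-- Standard normal distribution function Φ. -/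
noncomputable def stdCdf (h : ℝ) : ℝ := ∫ x in Set.Iio h, stdPdf x

/-- Inverse Φ⁻¹ of the standard normal distribution function (on (0,1)). -/
noncomputable def stdQuantile : ℝ → ℝ := Function.invFun stdCdf

/-- Bivariate standard normal density φ₂ with correlation ρ. -/
noncomputable def binPdf (x y ρ : ℝ) : ℝ :=
  (1 / (2 * Real.pi * Real.sqrt (1 - ρ ^ 2))) *
    Real.exp (-(x ^ 2 - 2 * ρ * x * y + y ^ 2) / (2 * (1 - ρ ^ 2)))

/-- Bivariate standard normal distribution function Φ₂. -/
noncomputable def binCdf (h k ρ : ℝ) : ℝ :=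
  ∫ x in Set.Iio h, ∫ y in Set.Iio k, binPdf x y ρ

/-- The bivariate normal copula C(u,v;ρ) = Φ₂(Φ⁻¹(u),Φ⁻¹(v);ρ). -/
noncomputable def normCopula (u v ρ : ℝ) : ℝ :=
  binCdf (stdQuantile u) (stdQuantile v) ρ

/-- g(u;ρ) = Φ(√((1−ρ)/(1+ρ))·Φ⁻¹(u)). -/
noncomputable def gFun (u ρ : ℝ) : ℝ :=
  stdCdf (Real.sqrt ((1 - ρ) / (1 + ρ)) * stdQuantile u)
/- ### Auxiliary lemmas -/

lemma stdPdf_nonneg (x : ℝ) : 0 ≤ stdPdf x := by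
  unfold stdPdf; positivity

lemma continuous_stdPdf : Continuous stdPdf := by
  unfold stdPdf; fun_prop

lemma stdPdf_eq' (x : ℝ) : stdPdf x = (1 / Real.sqrt (2 * Real.pi)) * Real.exp (-(1/2) * x ^ 2) := by
  unfold stdPdf; ring_nf

lemma integrable_stdPdf : Integrable stdPdf := by
  simp only [funext stdPdf_eq']
  exact (integrable_exp_neg_mul_sq (by norm_num)).const_mul _

lemma integral_stdPdf : ∫ x, stdPdf x = 1 := by
  simp only [funext stdPdf_eq']
  rw [integral_const_mul, integral_gaussian]
  rw [show π / (1/2 : ℝ) = 2 * π by ring]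
  rw [one_div, inv_mul_cancel₀]
  positivity

lemma integrable_stdPdf_affine (m σ : ℝ) (hσ : σ ≠ 0) :
    Integrable (fun x => stdPdf ((x - m) / σ)) := by
  have h1 : Integrable (fun x => stdPdf (x / σ)) := integrable_stdPdf.comp_div hσ
  have := h1.comp_sub_right (μ := volume) m
  simpa using this

lemma stdCdf_nonneg (h : ℝ) : 0 ≤ stdCdf h :=
  integral_nonneg fun x => stdPdf_nonneg x

lemma stdCdf_le_one (h : ℝ) : stdCdf h ≤ 1 := by
  rw [← integral_stdPdf]
  exact setIntegral_le_integral integrable_stdPdf (ae_of_all _ stdPdf_nonneg)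

lemma monotone_stdCdf : Monotone stdCdf := by
  intro x y hxy
  exact setIntegral_mono_set integrable_stdPdf.integrableOn
    (ae_of_all _ stdPdf_nonneg) (HasSubset.Subset.eventuallyLE (Iio_subset_Iio hxy))

lemma measurable_stdCdf : Measurable stdCdf := monotone_stdCdf.measurable

/-- change of variables for the Gaussian CDF on `Iio`. -/
lemma setIntegral_gauss (k m σ : ℝ) (hσ : 0 < σ) :
    ∫ s in Iio k, (1 / σ) * stdPdf ((s - m) / σ) = stdCdf ((k - m) / σ) := by
  have h1 : ∀ s : ℝ, (Iio k).indicator (fun s => (1/σ) * stdPdf ((s - m)/σ)) s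
      = (1/σ) * ((Iio ((k - m)/σ)).indicator stdPdf) ((s - m)/σ) := by
    intro s
    rw [Set.indicator_apply, Set.indicator_apply]
    by_cases hs : s < k
    · rw [if_pos (mem_Iio.mpr hs),
        if_pos (mem_Iio.mpr (div_lt_div_of_pos_right (by linarith) hσ))]
    · rw [if_neg (fun h => hs (mem_Iio.mp h)), if_neg, mul_zero]
      intro hmem
      exact hs (by have := (div_lt_div_iff_of_pos_right hσ).mp (mem_Iio.mp hmem); linarith)
  rw [← integral_indicator measurableSet_Iio]
  simp_rw [h1]
  rw [integral_const_mul]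
  have h2 : (∫ s : ℝ, ((Iio ((k - m)/σ)).indicator stdPdf) ((s - m)/σ))
      = |σ| • ∫ t : ℝ, ((Iio ((k - m)/σ)).indicator stdPdf) t := by
    have := MeasureTheory.Measure.integral_comp_div
      (fun t => ((Iio ((k - m)/σ)).indicator stdPdf) t) σ
    rw [← this]
    have := integral_sub_right_eq_self
      (μ := volume) (fun s : ℝ => ((Iio ((k - m)/σ)).indicator stdPdf) (s / σ)) m
    simp only [sub_div] at this ⊢
    rw [← this]
  rw [h2, integral_indicator measurableSet_Iio, abs_of_pos hσ, smul_eq_mul]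
  rw [← mul_assoc, one_div, inv_mul_cancel₀ hσ.ne', one_mul]
  rfl

/-- The basic Gaussian integral with a general quadratic exponent. -/
lemma gauss_core (p q r : ℝ) (hp : 0 < p) :
    ∫ x : ℝ, Real.exp (-(p * x ^ 2 + q * x + r))
      = Real.sqrt (π / p) * Real.exp (q ^ 2 / (4 * p) - r) := by
  have h1 : ∀ x : ℝ, -(p * x ^ 2 + q * x + r)
      = (q ^ 2 / (4 * p) - r) + (-p * (x + q / (2 * p)) ^ 2) := by
    intro x; field_simp; ring
  simp_rw [h1, Real.exp_add, integral_const_mul]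
  rw [integral_add_right_eq_self (fun x : ℝ => Real.exp (-p * x ^ 2)) (q / (2 * p))]
  rw [integral_gaussian]
  ring

/-- Gaussian convolution. -/
lemma conv (s β m σ τ : ℝ) (hσ : 0 < σ) (hτ : 0 < τ) :
    ∫ y : ℝ, (1 / σ) * stdPdf ((s - β * y) / σ) * ((1 / τ) * stdPdf ((y - m) / τ))
      = (1 / Real.sqrt (σ ^ 2 + β ^ 2 * τ ^ 2)) *
          stdPdf ((s - β * m) / Real.sqrt (σ ^ 2 + β ^ 2 * τ ^ 2)) := by
  have hDpos : (0:ℝ) < σ ^ 2 + β ^ 2 * τ ^ 2 := by positivity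
  set D : ℝ := σ ^ 2 + β ^ 2 * τ ^ 2 with hD
  have h2π : (0:ℝ) < 2 * π := by positivity
  have hs2π : Real.sqrt (2 * π) ^ 2 = 2 * π := Real.sq_sqrt h2π.le
  have hsD : Real.sqrt D ^ 2 = D := Real.sq_sqrt hDpos.le
  have hp : (0:ℝ) < D / (2 * σ ^ 2 * τ ^ 2) := by positivity
  have key : ∀ y : ℝ, (1 / σ) * stdPdf ((s - β * y) / σ) * ((1 / τ) * stdPdf ((y - m) / τ))
      = (1 / (2 * π * σ * τ)) *
        Real.exp (-((D / (2 * σ ^ 2 * τ ^ 2)) * y ^ 2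
          + (-(β * s * τ ^ 2 + m * σ ^ 2) / (σ ^ 2 * τ ^ 2)) * y
          + (s ^ 2 * τ ^ 2 + m ^ 2 * σ ^ 2) / (2 * σ ^ 2 * τ ^ 2))) := by
    intro y
    unfold stdPdf
    rw [show (1/σ) * ((1 / Real.sqrt (2*π)) * Real.exp (-((s - β*y)/σ) ^ 2 / 2)) *
        ((1/τ) * ((1 / Real.sqrt (2*π)) * Real.exp (-((y - m)/τ) ^ 2 / 2)))
      = (1 / (Real.sqrt (2*π) ^ 2 * σ * τ)) *
        (Real.exp (-((s - β*y)/σ) ^ 2 / 2) * Real.exp (-((y - m)/τ) ^ 2 / 2)) from by ring]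
    rw [hs2π, ← Real.exp_add]
    congr 1
    rw [hD]
    field_simp
    ring
  simp_rw [key]
  rw [integral_const_mul, gauss_core _ _ _ hp]
  have hexp : (-(β * s * τ ^ 2 + m * σ ^ 2) / (σ ^ 2 * τ ^ 2)) ^ 2 / (4 * (D / (2 * σ ^ 2 * τ ^ 2)))
      - (s ^ 2 * τ ^ 2 + m ^ 2 * σ ^ 2) / (2 * σ ^ 2 * τ ^ 2)
      = -((s - β * m) / Real.sqrt D) ^ 2 / 2 := by
    rw [div_pow, div_pow, hsD, hD]
    field_simp
    ring
  rw [hexp]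
  have hconst : (1 / (2 * π * σ * τ)) * Real.sqrt (π / (D / (2 * σ ^ 2 * τ ^ 2)))
      = (1 / Real.sqrt D) * (1 / Real.sqrt (2 * π)) := by
    have h1 : π / (D / (2 * σ ^ 2 * τ ^ 2)) = (2 * π) * σ ^ 2 * τ ^ 2 / D := by
      field_simp
    rw [h1]
    rw [show (2 * π) * σ ^ 2 * τ ^ 2 / D = ((2*π) * (σ^2 * τ^2)) * D⁻¹ by ring]
    rw [Real.sqrt_mul (by positivity : (0:ℝ) ≤ (2*π) * (σ^2*τ^2)) D⁻¹, Real.sqrt_inv]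
    rw [Real.sqrt_mul h2π.le (σ^2 * τ^2), Real.sqrt_mul (sq_nonneg σ) (τ^2),
      Real.sqrt_sq hσ.le, Real.sqrt_sq hτ.le]
    rw [show (2:ℝ) * π = Real.sqrt (2*π) ^ 2 from hs2π.symm]
    field_simp
    ring
    rw [Real.sqrt_sq (Real.sqrt_nonneg _)]
  unfold stdPdf
  rw [← mul_assoc, hconst]
  ring

/-- Fubini swap for our integrals. -/
lemma swap' (σ c : ℝ) (hσ : 0 < σ) (w : ℝ → ℝ) (hw : Measurable w)
    (hw0 : ∀ x, 0 ≤ w x) (hwi : Integrable w) (k : ℝ) :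
    ∫ x : ℝ, ∫ s in Iio k, (1 / σ) * stdPdf ((s - c * x) / σ) * w x
      = ∫ s in Iio k, ∫ x : ℝ, (1 / σ) * stdPdf ((s - c * x) / σ) * w x := by
  apply integral_integral_swap
  have hm : Measurable (Function.uncurry fun x s : ℝ =>
      (1 / σ) * stdPdf ((s - c * x) / σ) * w x) := by
    apply Measurable.mul
    · apply Measurable.const_mul
      apply continuous_stdPdf.measurable.comp
      fun_prop
    · exact hw.comp measurable_fst
  rw [integrable_prod_iff hm.aestronglyMeasurable]
  simp only [Function.uncurry_apply_pair]
  constructor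
  · refine ae_of_all _ fun x => ?_
    apply Integrable.restrict
    exact ((integrable_stdPdf_affine (c * x) σ hσ.ne').const_mul _).mul_const _
  · have heq : (fun x => ∫ s in Iio k, ‖(1 / σ) * stdPdf ((s - c * x) / σ) * w x‖)
        = fun x => stdCdf ((k - c * x) / σ) * w x := by
      funext x
      have h1 : ∀ s : ℝ, ‖(1 / σ) * stdPdf ((s - c * x) / σ) * w x‖
          = (1 / σ) * stdPdf ((s - c * x) / σ) * w x := by
        intro s
        apply norm_of_nonneg
        have := stdPdf_nonneg ((s - c * x) / σ)
        have := hw0 x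
        positivity
      simp_rw [h1]
      rw [integral_mul_const, setIntegral_gauss k (c * x) σ hσ]
    rw [heq]
    apply Integrable.mono' hwi
    · exact ((measurable_stdCdf.comp (by fun_prop)).mul hw).aestronglyMeasurable
    · refine ae_of_all _ fun x => ?_
      rw [norm_of_nonneg (mul_nonneg (stdCdf_nonneg _) (hw0 x))]
      calc stdCdf ((k - c * x) / σ) * w x ≤ 1 * w x :=
            mul_le_mul_of_nonneg_right (stdCdf_le_one _) (hw0 x)
        _ = w x := one_mul _

/-- Integrating a shifted Gaussian CDF against a Gaussian density. -/
lemma cdf_conv (k b μ σ τ : ℝ) (hσ : 0 < σ) (hτ : 0 < τ) :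
    ∫ y : ℝ, stdCdf ((k - b * y) / σ) * ((1 / τ) * stdPdf ((y - μ) / τ))
      = stdCdf ((k - b * μ) / Real.sqrt (σ ^ 2 + b ^ 2 * τ ^ 2)) := by
  have h1 : ∀ y : ℝ, stdCdf ((k - b * y) / σ) * ((1 / τ) * stdPdf ((y - μ) / τ))
      = ∫ s in Iio k, (1 / σ) * stdPdf ((s - b * y) / σ) * ((1 / τ) * stdPdf ((y - μ) / τ)) := by
    intro y
    rw [integral_mul_const, setIntegral_gauss k (b * y) σ hσ]
  simp_rw [h1]
  rw [swap' σ b hσ (fun y => (1 / τ) * stdPdf ((y - μ) / τ))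
    (by exact (continuous_stdPdf.measurable.comp (by fun_prop)).const_mul _)
    (fun y => by have := stdPdf_nonneg ((y - μ)/τ); positivity)
    ((integrable_stdPdf_affine μ τ hτ.ne').const_mul _) k]
  have h2 : ∀ s : ℝ, (∫ y : ℝ, (1 / σ) * stdPdf ((s - b * y) / σ) * ((1 / τ) * stdPdf ((y - μ) / τ)))
      = (1 / Real.sqrt (σ ^ 2 + b ^ 2 * τ ^ 2)) *
          stdPdf ((s - b * μ) / Real.sqrt (σ ^ 2 + b ^ 2 * τ ^ 2)) := fun s => conv s b μ σ τ hσ hτ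
  simp_rw [h2]
  exact setIntegral_gauss k (b * μ) _ (Real.sqrt_pos.mpr (by positivity))

lemma binPdf_factor (x y γ : ℝ) (hγ : γ ^ 2 < 1) :
    binPdf x y γ = stdPdf x *
      ((1 / Real.sqrt (1 - γ ^ 2)) * stdPdf ((y - γ * x) / Real.sqrt (1 - γ ^ 2))) := by
  have hc : (0:ℝ) < 1 - γ ^ 2 := by linarith
  have h2π : (0:ℝ) < 2 * π := by positivity
  unfold binPdf stdPdf
  rw [div_pow, Real.sq_sqrt hc.le]
  rw [show (1 / Real.sqrt (2*π)) * Real.exp (-x^2/2) *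
      ((1 / Real.sqrt (1 - γ^2)) * ((1 / Real.sqrt (2*π)) * Real.exp (-((y - γ*x)^2/(1-γ^2))/2)))
    = (1 / (Real.sqrt (2*π) ^ 2 * Real.sqrt (1 - γ^2))) *
      (Real.exp (-x^2/2) * Real.exp (-((y - γ*x)^2/(1-γ^2))/2)) from by ring]
  rw [Real.sq_sqrt h2π.le, ← Real.exp_add]
  congr 1
  field_simp
  ring

lemma pdf_swap (t x α : ℝ) (hα : α ^ 2 < 1) :
    (1 / Real.sqrt (1 - α ^ 2)) * stdPdf ((t - α * x) / Real.sqrt (1 - α ^ 2)) * stdPdf x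
      = stdPdf t * ((1 / Real.sqrt (1 - α ^ 2)) * stdPdf ((x - α * t) / Real.sqrt (1 - α ^ 2))) := by
  have ha : (0:ℝ) < 1 - α ^ 2 := by linarith
  unfold stdPdf
  rw [div_pow, div_pow, Real.sq_sqrt ha.le]
  rw [show (1 / Real.sqrt (1-α^2)) * ((1 / Real.sqrt (2*π)) * Real.exp (-((t-α*x)^2/(1-α^2))/2)) *
      ((1 / Real.sqrt (2*π)) * Real.exp (-x^2/2))
    = (1 / (Real.sqrt (2*π) * Real.sqrt (1-α^2) * Real.sqrt (2*π))) *
      (Real.exp (-((t-α*x)^2/(1-α^2))/2) * Real.exp (-x^2/2)) from by ring]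
  rw [show (1 / Real.sqrt (2*π)) * Real.exp (-t^2/2) *
      ((1 / Real.sqrt (1-α^2)) * ((1 / Real.sqrt (2*π)) * Real.exp (-((x-α*t)^2/(1-α^2))/2)))
    = (1 / (Real.sqrt (2*π) * Real.sqrt (1-α^2) * Real.sqrt (2*π))) *
      (Real.exp (-t^2/2) * Real.exp (-((x-α*t)^2/(1-α^2))/2)) from by ring]
  rw [← Real.exp_add, ← Real.exp_add]
  congr 1
  field_simp
  ring

theorem copula_double_integral_rep (u v α β γ ρ : ℝ)
    (hu : u ∈ Set.Ioo (0 : ℝ) 1) (hv : v ∈ Set.Ioo (0 : ℝ) 1)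
    (hα : α ∈ Set.Ioo (-1 : ℝ) 1) (hβ : β ∈ Set.Ioo (-1 : ℝ) 1)
    (hγ : γ ∈ Set.Ioo (-1 : ℝ) 1) (hα0 : α ≠ 0) (hβ0 : β ≠ 0)
    (hρ : ρ = α * β * γ) :
    normCopula u v ρ =
      ∫ x : ℝ, ∫ y : ℝ,
        stdCdf ((stdQuantile u - α * x) / Real.sqrt (1 - α ^ 2)) *
          stdCdf ((stdQuantile v - β * y) / Real.sqrt (1 - β ^ 2)) *
          binPdf x y γ := by
  have hα2 : α ^ 2 < 1 := by nlinarith [hα.1, hα.2]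
  have hβ2 : β ^ 2 < 1 := by nlinarith [hβ.1, hβ.2]
  have hγ2 : γ ^ 2 < 1 := by nlinarith [hγ.1, hγ.2]
  have hβγ2 : (β * γ) ^ 2 < 1 := by nlinarith [sq_nonneg β, sq_nonneg γ]
  have hρ2 : ρ ^ 2 < 1 := by
    rw [hρ]
    nlinarith [sq_nonneg α, sq_nonneg (β * γ), sq_nonneg (α * β * γ)]
  set h := stdQuantile u with hh
  set k := stdQuantile v with hk
  have ha : (0:ℝ) < Real.sqrt (1 - α ^ 2) := Real.sqrt_pos.mpr (by linarith)
  have hb : (0:ℝ) < Real.sqrt (1 - β ^ 2) := Real.sqrt_pos.mpr (by linarith)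
  have hc : (0:ℝ) < Real.sqrt (1 - γ ^ 2) := Real.sqrt_pos.mpr (by linarith)
  have hb' : (0:ℝ) < Real.sqrt (1 - (β * γ) ^ 2) := Real.sqrt_pos.mpr (by linarith)
  have hr : (0:ℝ) < Real.sqrt (1 - ρ ^ 2) := Real.sqrt_pos.mpr (by linarith)
  -- the intermediate weight function
  set w : ℝ → ℝ := fun x =>
    stdPdf x * stdCdf ((k - β * γ * x) / Real.sqrt (1 - (β * γ) ^ 2)) with hwdef
  have hw_meas : Measurable w :=
    continuous_stdPdf.measurable.mul (measurable_stdCdf.comp (by fun_prop))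
  have hw0 : ∀ x, 0 ≤ w x := fun x => mul_nonneg (stdPdf_nonneg x) (stdCdf_nonneg _)
  have hwi : Integrable w := by
    apply integrable_stdPdf.mono' hw_meas.aestronglyMeasurable
    refine ae_of_all _ fun x => ?_
    rw [norm_of_nonneg (hw0 x), hwdef]
    calc stdPdf x * stdCdf ((k - β * γ * x) / Real.sqrt (1 - (β * γ) ^ 2))
        ≤ stdPdf x * 1 := mul_le_mul_of_nonneg_left (stdCdf_le_one _) (stdPdf_nonneg x)
      _ = stdPdf x := mul_one _
  -- Step 1: compute the inner integral over y
  have sqrt_bc : Real.sqrt (Real.sqrt (1 - β ^ 2) ^ 2 + β ^ 2 * Real.sqrt (1 - γ ^ 2) ^ 2)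
      = Real.sqrt (1 - (β * γ) ^ 2) := by
    rw [Real.sq_sqrt (by linarith : (0:ℝ) ≤ 1 - β ^ 2),
      Real.sq_sqrt (by linarith : (0:ℝ) ≤ 1 - γ ^ 2)]
    congr 1; ring
  have step1 : ∀ x : ℝ,
      (∫ y : ℝ, stdCdf ((h - α * x) / Real.sqrt (1 - α ^ 2)) *
          stdCdf ((k - β * y) / Real.sqrt (1 - β ^ 2)) * binPdf x y γ)
        = stdCdf ((h - α * x) / Real.sqrt (1 - α ^ 2)) * w x := by
    intro x
    have e1 : ∀ y : ℝ, stdCdf ((h - α * x) / Real.sqrt (1 - α ^ 2)) *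
        stdCdf ((k - β * y) / Real.sqrt (1 - β ^ 2)) * binPdf x y γ
        = stdCdf ((h - α * x) / Real.sqrt (1 - α ^ 2)) * (stdPdf x *
            (stdCdf ((k - β * y) / Real.sqrt (1 - β ^ 2)) *
              ((1 / Real.sqrt (1 - γ ^ 2)) * stdPdf ((y - γ * x) / Real.sqrt (1 - γ ^ 2))))) := by
      intro y; rw [binPdf_factor x y γ hγ2]; ring
    simp_rw [e1, integral_const_mul]
    rw [cdf_conv k β (γ * x) _ _ hb hc, sqrt_bc, hwdef]
    rw [show β * (γ * x) = β * γ * x by ring]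
  -- Step 2: expand the remaining CDF as an integral over Iio h
  have step2 : ∀ x : ℝ, stdCdf ((h - α * x) / Real.sqrt (1 - α ^ 2)) * w x
      = ∫ t in Iio h, (1 / Real.sqrt (1 - α ^ 2)) *
          stdPdf ((t - α * x) / Real.sqrt (1 - α ^ 2)) * w x := by
    intro x
    rw [integral_mul_const, setIntegral_gauss h (α * x) _ ha]
  -- Step 3: compute the inner integral over x after swapping
  have step3 : ∀ t : ℝ,
      (∫ x : ℝ, (1 / Real.sqrt (1 - α ^ 2)) * stdPdf ((t - α * x) / Real.sqrt (1 - α ^ 2)) * w x)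
        = stdPdf t * stdCdf ((k - ρ * t) / Real.sqrt (1 - ρ ^ 2)) := by
    intro t
    have e3 : ∀ x : ℝ, (1 / Real.sqrt (1 - α ^ 2)) *
        stdPdf ((t - α * x) / Real.sqrt (1 - α ^ 2)) * w x
        = stdPdf t * (stdCdf ((k - β * γ * x) / Real.sqrt (1 - (β * γ) ^ 2)) *
            ((1 / Real.sqrt (1 - α ^ 2)) * stdPdf ((x - α * t) / Real.sqrt (1 - α ^ 2)))) := by
      intro x
      rw [hwdef]
      have hs := pdf_swap t x α hα2
      calc (1 / Real.sqrt (1 - α ^ 2)) * stdPdf ((t - α * x) / Real.sqrt (1 - α ^ 2)) *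
            (stdPdf x * stdCdf ((k - β * γ * x) / Real.sqrt (1 - (β * γ) ^ 2)))
          = ((1 / Real.sqrt (1 - α ^ 2)) * stdPdf ((t - α * x) / Real.sqrt (1 - α ^ 2)) *
              stdPdf x) * stdCdf ((k - β * γ * x) / Real.sqrt (1 - (β * γ) ^ 2)) := by ring
        _ = (stdPdf t * ((1 / Real.sqrt (1 - α ^ 2)) *
              stdPdf ((x - α * t) / Real.sqrt (1 - α ^ 2)))) *
              stdCdf ((k - β * γ * x) / Real.sqrt (1 - (β * γ) ^ 2)) := by rw [hs]
        _ = _ := by ring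
    simp_rw [e3, integral_const_mul]
    rw [cdf_conv k (β * γ) (α * t) _ _ hb' ha]
    have harg : Real.sqrt (Real.sqrt (1 - (β * γ) ^ 2) ^ 2 +
        (β * γ) ^ 2 * Real.sqrt (1 - α ^ 2) ^ 2) = Real.sqrt (1 - ρ ^ 2) := by
      rw [Real.sq_sqrt (by linarith : (0:ℝ) ≤ 1 - (β * γ) ^ 2),
        Real.sq_sqrt (by linarith : (0:ℝ) ≤ 1 - α ^ 2)]
      congr 1; rw [hρ]; ring
    rw [harg, show β * γ * (α * t) = ρ * t from by rw [hρ]; ring]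
  -- Step 4: compute the inner integral of the LHS
  have step4 : ∀ x : ℝ, (∫ s in Iio k, binPdf x s ρ)
      = stdPdf x * stdCdf ((k - ρ * x) / Real.sqrt (1 - ρ ^ 2)) := by
    intro x
    have e4 : ∀ s : ℝ, binPdf x s ρ = stdPdf x *
        ((1 / Real.sqrt (1 - ρ ^ 2)) * stdPdf ((s - ρ * x) / Real.sqrt (1 - ρ ^ 2))) :=
      fun s => binPdf_factor x s ρ hρ2
    simp_rw [e4, integral_const_mul]
    congr 1
    rw [← integral_const_mul]
    exact setIntegral_gauss k (ρ * x) _ hr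
  -- Assemble everything
  calc normCopula u v ρ
      = ∫ t in Iio h, stdPdf t * stdCdf ((k - ρ * t) / Real.sqrt (1 - ρ ^ 2)) := by
        unfold normCopula binCdf
        rw [← hh, ← hk]
        exact setIntegral_congr_fun measurableSet_Iio fun x _ => step4 x
    _ = ∫ t in Iio h, ∫ x : ℝ, (1 / Real.sqrt (1 - α ^ 2)) *
          stdPdf ((t - α * x) / Real.sqrt (1 - α ^ 2)) * w x := by
        exact setIntegral_congr_fun measurableSet_Iio fun t _ => (step3 t).symm
    _ = ∫ x : ℝ, ∫ t in Iio h, (1 / Real.sqrt (1 - α ^ 2)) *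
          stdPdf ((t - α * x) / Real.sqrt (1 - α ^ 2)) * w x :=
        (swap' _ α ha w hw_meas hw0 hwi h).symm
    _ = ∫ x : ℝ, stdCdf ((h - α * x) / Real.sqrt (1 - α ^ 2)) * w x := by
        simp_rw [← step2]
    _ = _ := by
        simp_rw [← step1]
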